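/- Let A be a finite-dimensional commutative ℂ-algebra, W a ℂ-vector space, and w = Σ_{l=1}^{μ} h_l ⊗ w_l ∈ A ⊗ W where h_1,…,h_μ is a ℂ-basis of A. Suppose g_1,…,g_n ∈ A generate A as a unital algebra, and M_1,…,M_n are commuting linear operators on W satisfying Σ_l h_l ⊗ M_j w_l = Σ_l (g_j h_l) ⊗ w_l for each j. Let Y ⊆ W be the span of w_1,…,w_μ. Then each M_j preserves Y, and the linear map α : A → Y defined using a nondegenerate invariant form (·,·) on A by α(f) = Σ_l (f, h_l) w_l satisfies M_j α(f) = α(g_j f) for all f ∈ A and all j. -/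

import Mathlib

open scoped TensorProduct

/-- Abstract Bethe setting: `A` a finite-dimensional commutative ℂ-algebra with nondegenerate
invariant symmetric form `B` and basis `bh`; `W` a vector space with commuting operators
`M j`; `g j` generators of `A`; `w l ∈ W` with `∑ l, bh l ⊗ M j (w l) = ∑ l, (g j * bh l) ⊗ w l`
in `A ⊗ W`.  Then each `M j` preserves `Y = span(w)`, and the map
`α : f ↦ ∑ l, B f (bh l) • w l` satisfies `M j (α f) = α (g j * f)`. -/
theorem bethe_operators_preserve_span_and_intertwine
    {A : Type*} [CommRing A] [Algebra ℂ A] [Module.Finite ℂ A]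
    (B : LinearMap.BilinForm ℂ A)
    (hsymm : ∀ f g : A, B f g = B g f)
    (hinv : ∀ f g h : A, B (f * g) h = B f (g * h))
    (hnd : ∀ f : A, (∀ g : A, B f g = 0) → f = 0)
    {μ nn : ℕ} (bh : Module.Basis (Fin μ) ℂ A)
    {W : Type*} [AddCommGroup W] [Module ℂ W]
    (M : Fin nn → Module.End ℂ W)
    (hcomm : ∀ i j, M i * M j = M j * M i)
    (g : Fin nn → A) (hgen : Algebra.adjoin ℂ (Set.range g) = ⊤)
    (w : Fin μ → W)
    (hid : ∀ j, (∑ l : Fin μ, (bh l) ⊗ₜ[ℂ] (M j (w l)) : A ⊗[ℂ] W) =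
      ∑ l : Fin μ, (g j * bh l) ⊗ₜ[ℂ] (w l)) :
    (∀ j, ∀ y ∈ Submodule.span ℂ (Set.range w),
        M j y ∈ Submodule.span ℂ (Set.range w)) ∧
    (∀ j, ∀ f : A,
        M j (∑ l : Fin μ, B f (bh l) • w l) = ∑ l : Fin μ, B (g j * f) (bh l) • w l) := by
  have key : ∀ j, ∀ f : A,
      M j (∑ l : Fin μ, B f (bh l) • w l) = ∑ l : Fin μ, B (g j * f) (bh l) • w l := by
    intro j f
    let T : A ⊗[ℂ] W →ₗ[ℂ] W := TensorProduct.lift ((LinearMap.lsmul ℂ W).comp (B f))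
    have hT : ∀ (a : A) (x : W), T (a ⊗ₜ[ℂ] x) = B f a • x := fun a x => rfl
    have h := congrArg T (hid j)
    simp only [map_sum, hT] at h
    calc M j (∑ l : Fin μ, B f (bh l) • w l)
        = ∑ l : Fin μ, B f (bh l) • M j (w l) := by
          rw [map_sum]; simp only [LinearMap.map_smul]
      _ = ∑ l : Fin μ, B (g j * f) (bh l) • w l := by
          rw [h]
          refine Finset.sum_congr rfl fun l _ => ?_
          rw [mul_comm (g j) f, hinv]
  refine ⟨?_, key⟩
  intro j y hy
  induction hy using Submodule.span_induction with
  | mem x hx =>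
    obtain ⟨l, rfl⟩ := hx
    have hwl : w l = ∑ m : Fin μ, B (B.dualBasis ((LinearMap.IsRefl.nondegenerate_iff_separatingLeft (fun x y h => by rw [hsymm]; exact h)).2 hnd) bh l) (bh m) • w m := by
      simp [LinearMap.BilinForm.apply_dualBasis_left, Finset.sum_ite_eq]
    rw [hwl, key]
    exact Submodule.sum_mem _ fun m _ =>
      Submodule.smul_mem _ _ (Submodule.subset_span ⟨m, rfl⟩)
  | zero => simp
  | add x y _ _ hx hy => rw [map_add]; exact Submodule.add_mem _ hx hy
  | smul c x _ hx => rw [LinearMap.map_smul]; exact Submodule.smul_mem _ _ hx
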